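/- In the Norton-Sakuma algebra of type 3A, the element y := (2/9)(4a_t + 4a_g + a_{g₋₁}) − (1/4)u_ρ is an idempotent, and the spectrum of ad_y is {0, 1, 1/3, 13/16} with all eigenvalues simple. -/

import Mathlib

open Module

set_option maxHeartbeats 1000000 in
theorem three_A_idempotent_spectrum
    (mul : (Fin 4 → ℝ) →ₗ[ℝ] (Fin 4 → ℝ) →ₗ[ℝ] (Fin 4 → ℝ))
    (hcomm : ∀ u v, mul u v = mul v u)
    (e : Fin 4 → (Fin 4 → ℝ)) (he : ∀ i, e i = Pi.single i 1)
    -- basis: e 0 = a_t, e 1 = a_g, e 2 = a_{g₋₁}, e 3 = u_ρ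
    (hidem : ∀ i, mul (e i) (e i) = e i)
    (h01 : mul (e 0) (e 1) =
      (1/32 : ℝ) • (2 • e 0 + 2 • e 1 + e 2) - (135/2048 : ℝ) • e 3)
    (h02 : mul (e 0) (e 2) =
      (1/32 : ℝ) • (2 • e 0 + 2 • e 2 + e 1) - (135/2048 : ℝ) • e 3)
    (h12 : mul (e 1) (e 2) =
      (1/32 : ℝ) • (2 • e 1 + 2 • e 2 + e 0) - (135/2048 : ℝ) • e 3)
    (h0u : mul (e 0) (e 3) =
      (1/9 : ℝ) • (2 • e 0 - e 1 - e 2) + (5/32 : ℝ) • e 3)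
    (h1u : mul (e 1) (e 3) =
      (1/9 : ℝ) • (2 • e 1 - e 0 - e 2) + (5/32 : ℝ) • e 3)
    (h2u : mul (e 2) (e 3) =
      (1/9 : ℝ) • (2 • e 2 - e 0 - e 1) + (5/32 : ℝ) • e 3) :
    mul ((2/9 : ℝ) • (4 • e 0 + 4 • e 1 + e 2) - (1/4 : ℝ) • e 3)
        ((2/9 : ℝ) • (4 • e 0 + 4 • e 1 + e 2) - (1/4 : ℝ) • e 3) =
      (2/9 : ℝ) • (4 • e 0 + 4 • e 1 + e 2) - (1/4 : ℝ) • e 3 ∧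
    (∀ μ : ℝ,
      Module.End.HasEigenvalue
        (mul ((2/9 : ℝ) • (4 • e 0 + 4 • e 1 + e 2) - (1/4 : ℝ) • e 3)) μ ↔
        μ ∈ ({0, 1, 1/3, 13/16} : Set ℝ)) ∧
    (∀ μ ∈ ({0, 1, 1/3, 13/16} : Set ℝ),
      Module.finrank ℝ
        (Module.End.eigenspace
          (mul ((2/9 : ℝ) • (4 • e 0 + 4 • e 1 + e 2) - (1/4 : ℝ) • e 3)) μ) = 1) := by
  set y : Fin 4 → ℝ := (2/9 : ℝ) • (4 • e 0 + 4 • e 1 + e 2) - (1/4 : ℝ) • e 3 with hy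
  -- the four columns of ad_y
  have col0 : mul y (e 0) = ![65/72, 13/144, 5/72, -115/1024] := by
    rw [hcomm, hy]
    simp only [map_sub, map_add, map_smul, map_nsmul]
    rw [hidem 0, h01, h02, h0u]
    simp only [he]
    funext j
    fin_cases j <;> simp [Pi.single_apply] <;> norm_num
  have col1 : mul y (e 1) = ![13/144, 65/72, 5/72, -115/1024] := by
    rw [hcomm, hy]
    simp only [map_sub, map_add, map_smul, map_nsmul]
    rw [hcomm (e 1) (e 0), h01, hidem 1, h12, h1u]
    simp only [he]
    funext j
    fin_cases j <;> simp [Pi.single_apply] <;> norm_num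
  have col2 : mul y (e 2) = ![1/9, 1/9, 5/18, -5/32] := by
    rw [hcomm, hy]
    simp only [map_sub, map_add, map_smul, map_nsmul]
    rw [hcomm (e 2) (e 0), h02, hcomm (e 2) (e 1), h12, hidem 2, h2u]
    simp only [he]
    funext j
    fin_cases j <;> simp [Pi.single_apply] <;> norm_num
  have col3 : mul y (e 3) = ![2/27, 2/27, -4/27, 1/16] := by
    rw [hcomm, hy]
    simp only [map_sub, map_add, map_smul, map_nsmul]
    rw [hcomm (e 3) (e 0), h0u, hcomm (e 3) (e 1), h1u, hcomm (e 3) (e 2), h2u, hidem 3]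
    simp only [he]
    funext j
    fin_cases j <;> simp [Pi.single_apply] <;> norm_num
  -- master formula for ad_y
  have k : ∀ w : Fin 4 → ℝ,
      mul y w = ![(65/72)*w 0 + (13/144)*w 1 + (1/9)*w 2 + (2/27)*w 3,
        (13/144)*w 0 + (65/72)*w 1 + (1/9)*w 2 + (2/27)*w 3,
        (5/72)*w 0 + (5/72)*w 1 + (5/18)*w 2 - (4/27)*w 3,
        (-115/1024)*w 0 - (115/1024)*w 1 - (5/32)*w 2 + (1/16)*w 3] := by
    intro w
    have hdec : w = w 0 • e 0 + w 1 • e 1 + w 2 • e 2 + w 3 • e 3 := by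
      simp only [he]; funext j; fin_cases j <;> simp [Pi.single_apply]
    conv_lhs => rw [hdec]
    simp only [map_add, map_smul, col0, col1, col2, col3]
    funext j
    fin_cases j <;> simp <;> ring
  have hyv : y = ![8/9, 8/9, 2/9, -1/4] := by
    rw [hy]; simp only [he]; funext j
    fin_cases j <;> simp [Pi.single_apply] <;> norm_num
  -- eigenvectors
  have hev0 : mul y ![(-32:ℝ), -32, 136, 225] = (0:ℝ) • ![(-32:ℝ), -32, 136, 225] := by
    rw [k]; funext j; fin_cases j <;> simp <;> norm_num
  have hev1 : mul y ![(32:ℝ), 32, 8, -9] = (1:ℝ) • ![(32:ℝ), 32, 8, -9] := by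
    rw [k]; funext j; fin_cases j <;> simp <;> norm_num
  have hev2 : mul y ![(32:ℝ), 32, -280, 135] = (1/3:ℝ) • ![(32:ℝ), 32, -280, 135] := by
    rw [k]; funext j; fin_cases j <;> simp <;> norm_num
  have hev3 : mul y ![(-1:ℝ), 1, 0, 0] = (13/16:ℝ) • ![(-1:ℝ), 1, 0, 0] := by
    rw [k]; funext j; fin_cases j <;> simp <;> norm_num
  have hne0 : (![(-32:ℝ), -32, 136, 225]) ≠ 0 := by
    intro h; have := congrFun h 3; change (225:ℝ) = 0 at this; norm_num at this
  have hne1 : (![(32:ℝ), 32, 8, -9]) ≠ 0 := by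
    intro h; have := congrFun h 0; norm_num at this
  have hne2 : (![(32:ℝ), 32, -280, 135]) ≠ 0 := by
    intro h; have := congrFun h 0; norm_num at this
  have hne3 : (![(-1:ℝ), 1, 0, 0]) ≠ 0 := by
    intro h; have := congrFun h 1; norm_num at this
  refine ⟨?_, ?_, ?_⟩
  · -- idempotency
    rw [k y, hyv]
    funext j
    fin_cases j <;> simp <;> norm_num
  · -- spectrum
    intro μ
    constructor
    · intro hμ
      obtain ⟨w, hw⟩ := hμ.exists_hasEigenvector
      have hfw := hw.apply_eq_smul
      rw [k w] at hfw
      have E0 : (65/72)*w 0 + (13/144)*w 1 + (1/9)*w 2 + (2/27)*w 3 = μ * w 0 := by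
        simpa using congrFun hfw 0
      have E1 : (13/144)*w 0 + (65/72)*w 1 + (1/9)*w 2 + (2/27)*w 3 = μ * w 1 := by
        simpa using congrFun hfw 1
      have E2 : (5/72)*w 0 + (5/72)*w 1 + (5/18)*w 2 - (4/27)*w 3 = μ * w 2 := by
        simpa using congrFun hfw 2
      have E3 : (-115/1024)*w 0 - (115/1024)*w 1 - (5/32)*w 2 + (1/16)*w 3 = μ * w 3 := by
        simpa using congrFun hfw 3
      have H0 : ((0:ℝ) - μ) * ((5/18432)*w 0 + (5/18432)*w 1 + (1/576)*w 2 + (1/288)*w 3) = 0 := by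
        linear_combination (5/18432)*E0 + (5/18432)*E1 + (1/576)*E2 + (1/288)*E3
      have H1 : ((1:ℝ) - μ) * ((565/36864)*w 0 + (565/36864)*w 1 + (5/1152)*w 2 + (1/576)*w 3) = 0 := by
        linear_combination (565/36864)*E0 + (565/36864)*E1 + (5/1152)*E2 + (1/576)*E3
      have H2 : ((1/3:ℝ) - μ) * ((7/12288)*w 0 + (7/12288)*w 1 + (-1/384)*w 2 + (1/576)*w 3) = 0 := by
        linear_combination (7/12288)*E0 + (7/12288)*E1 + (-1/384)*E2 + (1/576)*E3
      have H3 : ((13/16:ℝ) - μ) * ((-1/2)*w 0 + (1/2)*w 1 + (0)*w 2 + (0)*w 3) = 0 := by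
        linear_combination (-1/2)*E0 + (1/2)*E1
      by_contra hnot
      simp only [Set.mem_insert_iff, Set.mem_singleton_iff, not_or] at hnot
      obtain ⟨n0, n1, n2, n3⟩ := hnot
      have c0 : (5/18432)*w 0 + (5/18432)*w 1 + (1/576)*w 2 + (1/288)*w 3 = 0 := by
        rcases mul_eq_zero.mp H0 with h | h
        · exact absurd (by linarith : μ = 0) n0
        · exact h
      have c1 : (565/36864)*w 0 + (565/36864)*w 1 + (5/1152)*w 2 + (1/576)*w 3 = 0 := by
        rcases mul_eq_zero.mp H1 with h | h
        · exact absurd (by linarith : μ = 1) n1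
        · exact h
      have c2 : (7/12288)*w 0 + (7/12288)*w 1 + (-1/384)*w 2 + (1/576)*w 3 = 0 := by
        rcases mul_eq_zero.mp H2 with h | h
        · exact absurd (by linarith : μ = 1/3) n2
        · exact h
      have c3 : (-1/2)*w 0 + (1/2)*w 1 + (0)*w 2 + (0)*w 3 = 0 := by
        rcases mul_eq_zero.mp H3 with h | h
        · exact absurd (by linarith : μ = 13/16) n3
        · exact h
      apply hw.2
      funext j
      fin_cases j
      · show w 0 = 0; linear_combination (-32)*c0 + (32)*c1 + (32)*c2 + (-1)*c3
      · show w 1 = 0; linear_combination (-32)*c0 + (32)*c1 + (32)*c2 + (1)*c3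
      · show w 2 = 0; linear_combination (136)*c0 + (8)*c1 + (-280)*c2
      · show w 3 = 0; linear_combination (225)*c0 + (-9)*c1 + (135)*c2
    · intro hm
      simp only [Set.mem_insert_iff, Set.mem_singleton_iff] at hm
      rcases hm with rfl | rfl | rfl | rfl
      · exact Module.End.hasEigenvalue_of_hasEigenvector
          ⟨Module.End.mem_eigenspace_iff.mpr hev0, hne0⟩
      · exact Module.End.hasEigenvalue_of_hasEigenvector
          ⟨Module.End.mem_eigenspace_iff.mpr hev1, hne1⟩
      · exact Module.End.hasEigenvalue_of_hasEigenvector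
          ⟨Module.End.mem_eigenspace_iff.mpr hev2, hne2⟩
      · exact Module.End.hasEigenvalue_of_hasEigenvector
          ⟨Module.End.mem_eigenspace_iff.mpr hev3, hne3⟩
  · -- finrank of eigenspaces
    intro μ hm
    simp only [Set.mem_insert_iff, Set.mem_singleton_iff] at hm
    rcases hm with rfl | rfl | rfl | rfl
    · have hsp : Module.End.eigenspace (mul y) (0:ℝ) = ℝ ∙ ![(-32:ℝ), -32, 136, 225] := by
        apply le_antisymm
        · intro w hwm
          rw [Module.End.mem_eigenspace_iff] at hwm
          rw [k w] at hwm
          have E0 : (65/72)*w 0 + (13/144)*w 1 + (1/9)*w 2 + (2/27)*w 3 = (0:ℝ) * w 0 := by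
            simpa using congrFun hwm 0
          have E1 : (13/144)*w 0 + (65/72)*w 1 + (1/9)*w 2 + (2/27)*w 3 = (0:ℝ) * w 1 := by
            simpa using congrFun hwm 1
          have E2 : (5/72)*w 0 + (5/72)*w 1 + (5/18)*w 2 - (4/27)*w 3 = (0:ℝ) * w 2 := by
            simpa using congrFun hwm 2
          have E3 : (-115/1024)*w 0 - (115/1024)*w 1 - (5/32)*w 2 + (1/16)*w 3 = (0:ℝ) * w 3 := by
            simpa using congrFun hwm 3
          have c1 : (565/36864)*w 0 + (565/36864)*w 1 + (5/1152)*w 2 + (1/576)*w 3 = 0 := by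
            linear_combination (565/36864)*E0 + (565/36864)*E1 + (5/1152)*E2 + (1/576)*E3
          have c2 : (7/12288)*w 0 + (7/12288)*w 1 + (-1/384)*w 2 + (1/576)*w 3 = 0 := by
            linear_combination (7/4096)*E0 + (7/4096)*E1 + (-1/128)*E2 + (1/192)*E3
          have c3 : (-1/2)*w 0 + (1/2)*w 1 + (0)*w 2 + (0)*w 3 = 0 := by
            linear_combination (-8/13)*E0 + (8/13)*E1
          rw [Submodule.mem_span_singleton]
          refine ⟨(5/18432)*w 0 + (5/18432)*w 1 + (1/576)*w 2 + (1/288)*w 3, ?_⟩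
          funext j
          fin_cases j <;> simp
          · linear_combination (-32)*c1 + (-32)*c2 + (1)*c3
          · linear_combination (-32)*c1 + (-32)*c2 + (-1)*c3
          · linear_combination (-8)*c1 + (280)*c2
          · linear_combination (9)*c1 + (-135)*c2
        · rw [Submodule.span_singleton_le_iff_mem]
          exact Module.End.mem_eigenspace_iff.mpr hev0
      rw [hsp]
      exact finrank_span_singleton hne0
    · have hsp : Module.End.eigenspace (mul y) (1:ℝ) = ℝ ∙ ![(32:ℝ), 32, 8, -9] := by
        apply le_antisymm
        · intro w hwm
          rw [Module.End.mem_eigenspace_iff] at hwm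
          rw [k w] at hwm
          have E0 : (65/72)*w 0 + (13/144)*w 1 + (1/9)*w 2 + (2/27)*w 3 = (1:ℝ) * w 0 := by
            simpa using congrFun hwm 0
          have E1 : (13/144)*w 0 + (65/72)*w 1 + (1/9)*w 2 + (2/27)*w 3 = (1:ℝ) * w 1 := by
            simpa using congrFun hwm 1
          have E2 : (5/72)*w 0 + (5/72)*w 1 + (5/18)*w 2 - (4/27)*w 3 = (1:ℝ) * w 2 := by
            simpa using congrFun hwm 2
          have E3 : (-115/1024)*w 0 - (115/1024)*w 1 - (5/32)*w 2 + (1/16)*w 3 = (1:ℝ) * w 3 := by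
            simpa using congrFun hwm 3
          have c0 : (5/18432)*w 0 + (5/18432)*w 1 + (1/576)*w 2 + (1/288)*w 3 = 0 := by
            linear_combination (-5/18432)*E0 + (-5/18432)*E1 + (-1/576)*E2 + (-1/288)*E3
          have c2 : (7/12288)*w 0 + (7/12288)*w 1 + (-1/384)*w 2 + (1/576)*w 3 = 0 := by
            linear_combination (-7/8192)*E0 + (-7/8192)*E1 + (1/256)*E2 + (-1/384)*E3
          have c3 : (-1/2)*w 0 + (1/2)*w 1 + (0)*w 2 + (0)*w 3 = 0 := by
            linear_combination (8/3)*E0 + (-8/3)*E1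
          rw [Submodule.mem_span_singleton]
          refine ⟨(565/36864)*w 0 + (565/36864)*w 1 + (5/1152)*w 2 + (1/576)*w 3, ?_⟩
          funext j
          fin_cases j <;> simp
          · linear_combination (32)*c0 + (-32)*c2 + (1)*c3
          · linear_combination (32)*c0 + (-32)*c2 + (-1)*c3
          · linear_combination (-136)*c0 + (280)*c2
          · linear_combination (-225)*c0 + (-135)*c2
        · rw [Submodule.span_singleton_le_iff_mem]
          exact Module.End.mem_eigenspace_iff.mpr hev1
      rw [hsp]
      exact finrank_span_singleton hne1
    · have hsp : Module.End.eigenspace (mul y) (1/3:ℝ) = ℝ ∙ ![(32:ℝ), 32, -280, 135] := by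
        apply le_antisymm
        · intro w hwm
          rw [Module.End.mem_eigenspace_iff] at hwm
          rw [k w] at hwm
          have E0 : (65/72)*w 0 + (13/144)*w 1 + (1/9)*w 2 + (2/27)*w 3 = (1/3:ℝ) * w 0 := by
            simpa using congrFun hwm 0
          have E1 : (13/144)*w 0 + (65/72)*w 1 + (1/9)*w 2 + (2/27)*w 3 = (1/3:ℝ) * w 1 := by
            simpa using congrFun hwm 1
          have E2 : (5/72)*w 0 + (5/72)*w 1 + (5/18)*w 2 - (4/27)*w 3 = (1/3:ℝ) * w 2 := by
            simpa using congrFun hwm 2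
          have E3 : (-115/1024)*w 0 - (115/1024)*w 1 - (5/32)*w 2 + (1/16)*w 3 = (1/3:ℝ) * w 3 := by
            simpa using congrFun hwm 3
          have c0 : (5/18432)*w 0 + (5/18432)*w 1 + (1/576)*w 2 + (1/288)*w 3 = 0 := by
            linear_combination (-5/6144)*E0 + (-5/6144)*E1 + (-1/192)*E2 + (-1/96)*E3
          have c1 : (565/36864)*w 0 + (565/36864)*w 1 + (5/1152)*w 2 + (1/576)*w 3 = 0 := by
            linear_combination (565/24576)*E0 + (565/24576)*E1 + (5/768)*E2 + (1/384)*E3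
          have c3 : (-1/2)*w 0 + (1/2)*w 1 + (0)*w 2 + (0)*w 3 = 0 := by
            linear_combination (-24/23)*E0 + (24/23)*E1
          rw [Submodule.mem_span_singleton]
          refine ⟨(7/12288)*w 0 + (7/12288)*w 1 + (-1/384)*w 2 + (1/576)*w 3, ?_⟩
          funext j
          fin_cases j <;> simp
          · linear_combination (32)*c0 + (-32)*c1 + (1)*c3
          · linear_combination (32)*c0 + (-32)*c1 + (-1)*c3
          · linear_combination (-136)*c0 + (-8)*c1
          · linear_combination (-225)*c0 + (9)*c1
        · rw [Submodule.span_singleton_le_iff_mem]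
          exact Module.End.mem_eigenspace_iff.mpr hev2
      rw [hsp]
      exact finrank_span_singleton hne2
    · have hsp : Module.End.eigenspace (mul y) (13/16:ℝ) = ℝ ∙ ![(-1:ℝ), 1, 0, 0] := by
        apply le_antisymm
        · intro w hwm
          rw [Module.End.mem_eigenspace_iff] at hwm
          rw [k w] at hwm
          have E0 : (65/72)*w 0 + (13/144)*w 1 + (1/9)*w 2 + (2/27)*w 3 = (13/16:ℝ) * w 0 := by
            simpa using congrFun hwm 0
          have E1 : (13/144)*w 0 + (65/72)*w 1 + (1/9)*w 2 + (2/27)*w 3 = (13/16:ℝ) * w 1 := by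
            simpa using congrFun hwm 1
          have E2 : (5/72)*w 0 + (5/72)*w 1 + (5/18)*w 2 - (4/27)*w 3 = (13/16:ℝ) * w 2 := by
            simpa using congrFun hwm 2
          have E3 : (-115/1024)*w 0 - (115/1024)*w 1 - (5/32)*w 2 + (1/16)*w 3 = (13/16:ℝ) * w 3 := by
            simpa using congrFun hwm 3
          have c0 : (5/18432)*w 0 + (5/18432)*w 1 + (1/576)*w 2 + (1/288)*w 3 = 0 := by
            linear_combination (-5/14976)*E0 + (-5/14976)*E1 + (-1/468)*E2 + (-1/234)*E3
          have c1 : (565/36864)*w 0 + (565/36864)*w 1 + (5/1152)*w 2 + (1/576)*w 3 = 0 := by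
            linear_combination (565/6912)*E0 + (565/6912)*E1 + (5/216)*E2 + (1/108)*E3
          have c2 : (7/12288)*w 0 + (7/12288)*w 1 + (-1/384)*w 2 + (1/576)*w 3 = 0 := by
            linear_combination (-7/5888)*E0 + (-7/5888)*E1 + (1/184)*E2 + (-1/276)*E3
          rw [Submodule.mem_span_singleton]
          refine ⟨(-1/2)*w 0 + (1/2)*w 1 + (0)*w 2 + (0)*w 3, ?_⟩
          funext j
          fin_cases j <;> simp
          · linear_combination (32)*c0 + (-32)*c1 + (-32)*c2
          · linear_combination (32)*c0 + (-32)*c1 + (-32)*c2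
          · linear_combination (-136)*c0 + (-8)*c1 + (280)*c2
          · linear_combination (-225)*c0 + (9)*c1 + (-135)*c2
        · rw [Submodule.span_singleton_le_iff_mem]
          exact Module.End.mem_eigenspace_iff.mpr hev3
      rw [hsp]
      exact finrank_span_singleton hne3
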